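/- Let X be a compact metric space and f : X → X continuous. If f has the almost asymptotic average shadowing property, then f has the mean ergodic shadowing property. -/
import Mathlib


open Filter Metric

open scoped Classical in
noncomputable def upperDens (A : Set ℕ) : ℝ :=
  Filter.limsup (fun n => (((Finset.range n).filter (· ∈ A)).card : ℝ) / n) Filter.atTop

open scoped Classical in
noncomputable def lowerDens (A : Set ℕ) : ℝ :=
  Filter.liminf (fun n => (((Finset.range n).filter (· ∈ A)).card : ℝ) / n) Filter.atTop

open scoped Classical in
def DensityZero (A : Set ℕ) : Prop :=
  Filter.Tendsto (fun n => (((Finset.range n).filter (· ∈ A)).card : ℝ) / n)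
    Filter.atTop (nhds 0)

noncomputable def cesaro (a : ℕ → ℝ) (n : ℕ) : ℝ := (∑ i ∈ Finset.range n, a i) / n

variable {X : Type*} [MetricSpace X]

def ErgodicPO (f : X → X) (δ : ℝ) (x : ℕ → X) : Prop :=
  DensityZero {j | δ ≤ dist (f (x j)) (x (j + 1))}

def AvgPO (f : X → X) (δ : ℝ) (x : ℕ → X) : Prop :=
  ∃ N : ℕ, 0 < N ∧ ∀ n ≥ N, ∀ k : ℕ,
    (∑ j ∈ Finset.range n, dist (f (x (j + k))) (x (j + k + 1))) / n < δ

def WeakAsympAvgPO (f : X → X) (δ : ℝ) (x : ℕ → X) : Prop :=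
  Filter.limsup (cesaro (fun j => dist (f (x j)) (x (j + 1)))) Filter.atTop < δ

def AsympAvgPO (f : X → X) (x : ℕ → X) : Prop :=
  Filter.Tendsto (cesaro (fun j => dist (f (x j)) (x (j + 1)))) Filter.atTop (nhds 0)

def ShadowAvg (f : X → X) (ε : ℝ) (z : X) (x : ℕ → X) : Prop :=
  Filter.limsup (cesaro (fun j => dist (f^[j] z) (x j))) Filter.atTop < ε

def MeanErgodicShadowing (f : X → X) : Prop :=
  ∀ ε > (0:ℝ), ∃ δ > (0:ℝ), ∀ x : ℕ → X, ErgodicPO f δ x → ∃ z, ShadowAvg f ε z x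

def AvgShadowing (f : X → X) : Prop :=
  ∀ ε > (0:ℝ), ∃ δ > (0:ℝ), ∀ x : ℕ → X, AvgPO f δ x → ∃ z, ShadowAvg f ε z x

def WeakAsympAvgShadowing (f : X → X) : Prop :=
  ∀ ε > (0:ℝ), ∀ x : ℕ → X, AsympAvgPO f x → ∃ z, ShadowAvg f ε z x

def AlmostAsympAvgShadowing (f : X → X) : Prop :=
  ∀ ε > (0:ℝ), ∃ δ > (0:ℝ), ∀ x : ℕ → X, WeakAsympAvgPO f δ x → ∃ z, ShadowAvg f ε z x

def AsympAvgShadowing (f : X → X) : Prop :=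
  ∀ x : ℕ → X, AsympAvgPO f x →
    ∃ z, Filter.Tendsto (cesaro (fun j => dist (f^[j] z) (x j))) Filter.atTop (nhds 0)

def MalphaShadowing (f : X → X) (α : ℝ) : Prop :=
  ∀ ε > (0:ℝ), ∃ δ > (0:ℝ), ∀ x : ℕ → X, ErgodicPO f δ x →
    ∃ z, α < lowerDens {j | dist (f^[j] z) (x j) < ε}

theorem stmt6 {X : Type*} [MetricSpace X] [CompactSpace X] (f : X → X)
    (hf : Continuous f) (h : AlmostAsympAvgShadowing f) : MeanErgodicShadowing f := by
  intro ε hε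
  obtain ⟨δ, hδ, hδ'⟩ := h ε hε
  refine ⟨δ / 2, by positivity, fun x hx => ?_⟩
  apply hδ'
  unfold WeakAsympAvgPO
  classical
  set D := Metric.diam (Set.univ : Set X) with hD
  have hD0 : 0 ≤ D := Metric.diam_nonneg
  have hbd : ∀ j, dist (f (x j)) (x (j + 1)) ≤ D := fun j =>
    Metric.dist_le_diam_of_mem isCompact_univ.isBounded (Set.mem_univ _) (Set.mem_univ _)
  set A : Set ℕ := {j | δ / 2 ≤ dist (f (x j)) (x (j + 1))} with hA
  set g : ℕ → ℝ := fun n => D * ((((Finset.range n).filter (· ∈ A)).card : ℝ) / n) + δ / 2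
    with hg
  have key : ∀ n, cesaro (fun j => dist (f (x j)) (x (j + 1))) n ≤ g n := by
    intro n
    rcases Nat.eq_zero_or_pos n with rfl | hn
    · simp [cesaro, g]
      positivity
    · have hn' : (0:ℝ) < n := by exact_mod_cast hn
      have hsum : (∑ j ∈ Finset.range n, dist (f (x j)) (x (j + 1))) ≤
          D * (((Finset.range n).filter (· ∈ A)).card : ℝ) + (δ / 2) * n := by
        rw [← Finset.sum_filter_add_sum_filter_not (Finset.range n) (· ∈ A)]
        gcongr ?_ + ?_
        · calc (∑ j ∈ (Finset.range n).filter (· ∈ A), dist (f (x j)) (x (j + 1)))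
              ≤ ∑ j ∈ (Finset.range n).filter (· ∈ A), D :=
                Finset.sum_le_sum fun j _ => hbd j
            _ = D * (((Finset.range n).filter (· ∈ A)).card : ℝ) := by
                rw [Finset.sum_const, nsmul_eq_mul, mul_comm]
        · calc (∑ j ∈ (Finset.range n).filter (¬ · ∈ A), dist (f (x j)) (x (j + 1)))
              ≤ ∑ j ∈ (Finset.range n).filter (¬ · ∈ A), δ / 2 := by
                refine Finset.sum_le_sum fun j hj => ?_
                have := (Finset.mem_filter.mp hj).2
                simp only [hA, Set.mem_setOf_eq] at this
                linarith [not_le.mp this]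
            _ = (δ / 2) * (((Finset.range n).filter (¬ · ∈ A)).card : ℝ) := by
                rw [Finset.sum_const, nsmul_eq_mul, mul_comm]
            _ ≤ (δ / 2) * n := by
                gcongr
                simpa using Finset.card_filter_le (Finset.range n) (¬ · ∈ A)
      have : (∑ j ∈ Finset.range n, dist (f (x j)) (x (j + 1))) / n ≤
          (D * (((Finset.range n).filter (· ∈ A)).card : ℝ) + (δ / 2) * n) / n :=
        div_le_div_of_nonneg_right hsum hn'.le |>.trans_eq rfl
      calc cesaro (fun j => dist (f (x j)) (x (j + 1))) n
          ≤ (D * (((Finset.range n).filter (· ∈ A)).card : ℝ) + (δ / 2) * n) / n := this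
        _ = g n := by
            simp only [g]
            rw [add_div, mul_div_assoc, mul_div_assoc, div_self (ne_of_gt hn'), mul_one]
  have hgtend : Filter.Tendsto g Filter.atTop (nhds (δ / 2)) := by
    have : Filter.Tendsto g Filter.atTop (nhds (D * 0 + δ / 2)) :=
      ((hx.const_mul D).add tendsto_const_nhds)
    simpa using this
  have hlim : Filter.limsup (cesaro (fun j => dist (f (x j)) (x (j + 1)))) Filter.atTop ≤
      δ / 2 := by
    have hgl : Filter.limsup g Filter.atTop = δ / 2 := hgtend.limsup_eq
    rw [← hgl]
    refine Filter.limsup_le_limsup (Filter.Eventually.of_forall key) ?_ ?_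
    · refine Filter.IsBoundedUnder.isCoboundedUnder_le
        ⟨0, Filter.eventually_map.mpr (Filter.Eventually.of_forall fun n => ?_)⟩
      exact div_nonneg (Finset.sum_nonneg fun j _ => dist_nonneg) (Nat.cast_nonneg n)
    · exact hgtend.isBoundedUnder_le
  linarith
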